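/- arXiv:1610.08892 — 3 statements merged into one kernel-verified Lean document; each statement's English description precedes it below -/
import Mathlib

section
/- Let Ω ⊂ ℝ² be open, u ∈ C²(Ω), and let γ : I → Ω be a C² curve parametrized by arc length with u(γ(s)) = 0 for all s ∈ I. Set ν(s) := Jγ'(s) (J the counterclockwise rotation by π/2) and κ(s) := ⟨γ''(s), ν(s)⟩. Let g be a C¹ function on a neighborhood of the unit circle 𝕊¹ ⊂ ℝ² such that ⟨Du(γ(s)), ν(s)⟩ = g(ν(s)) for all s ∈ I. Then D²u_{γ(s)}(γ'(s), ν(s)) = −κ(s) · ⟨Dg(ν(s)), γ'(s)⟩ for all s ∈ I. -/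
open Set

/-- Partial derivative in the `x` direction. -/
noncomputable def px (u : ℝ × ℝ → ℝ) (p : ℝ × ℝ) : ℝ := fderiv ℝ u p (1, 0)

/-- Partial derivative in the `y` direction. -/
noncomputable def py (u : ℝ × ℝ → ℝ) (p : ℝ × ℝ) : ℝ := fderiv ℝ u p (0, 1)

/-- The gradient `Du = (u_x, u_y)`. -/
noncomputable def grad (u : ℝ × ℝ → ℝ) (p : ℝ × ℝ) : ℝ × ℝ := (px u p, py u p)

/-- The Hessian `D²u_p(v, w)` as a bilinear form. -/
noncomputable def hess (u : ℝ × ℝ → ℝ) (v w : ℝ × ℝ) (p : ℝ × ℝ) : ℝ :=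
  fderiv ℝ (fun q => fderiv ℝ u q v) p w

/-- The determinant of the Hessian matrix of `u` at `p`. -/
noncomputable def hessDet (u : ℝ × ℝ → ℝ) (p : ℝ × ℝ) : ℝ :=
  hess u (1, 0) (1, 0) p * hess u (0, 1) (0, 1) p -
    hess u (1, 0) (0, 1) p * hess u (0, 1) (1, 0) p

/-- The triple `(u_xx, u_xy, u_yy)` of second derivatives of `u` at `p`. -/
noncomputable def hessTriple (u : ℝ × ℝ → ℝ) (p : ℝ × ℝ) : ℝ × ℝ × ℝ :=
  (hess u (1, 0) (1, 0) p, hess u (1, 0) (0, 1) p, hess u (0, 1) (0, 1) p)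

/-- Euclidean dot product on `ℝ × ℝ`. -/
def dot (v w : ℝ × ℝ) : ℝ := v.1 * w.1 + v.2 * w.2

/-- Counterclockwise rotation by `π/2`. -/
def Jrot (v : ℝ × ℝ) : ℝ × ℝ := (-v.2, v.1)

/-- `Du : s → t` is an orientation-preserving (`C¹`) diffeomorphism from `s` onto `t`:
it is `C¹`, injective, has image `t`, has everywhere positive Jacobian determinant
(the determinant of the Hessian of `u`), and has a `C¹` inverse. -/
structure IsGradOPDiffeoOnto (u : ℝ × ℝ → ℝ) (s t : Set (ℝ × ℝ)) : Prop where
  contDiffOn : ContDiffOn ℝ 1 (grad u) s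
  injOn : Set.InjOn (grad u) s
  image_eq : grad u '' s = t
  jacPos : ∀ p ∈ s, 0 < hessDet u p
  inv : ∃ ginv : ℝ × ℝ → ℝ × ℝ, ContDiffOn ℝ 1 ginv t ∧ ∀ p ∈ s, ginv (grad u p) = p

lemma clm_apply_expand (L : (ℝ × ℝ) →L[ℝ] ℝ) (z : ℝ × ℝ) :
    L z = z.1 * L (1, 0) + z.2 * L (0, 1) := by
  have hz : z = z.1 • ((1:ℝ), (0:ℝ)) + z.2 • ((0:ℝ), (1:ℝ)) := by ext <;> simp
  calc L z = L (z.1 • ((1:ℝ), (0:ℝ)) + z.2 • ((0:ℝ), (1:ℝ))) := by rw [← hz]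
    _ = z.1 * L (1, 0) + z.2 * L (0, 1) := by
        rw [map_add, map_smul, map_smul]; simp [smul_eq_mul]

lemma hess_hasFDerivAt {u : ℝ × ℝ → ℝ} {p : ℝ × ℝ} (hu : ContDiffAt ℝ 2 u p) (v : ℝ × ℝ) :
    HasFDerivAt (fun q => fderiv ℝ u q v) ((fderiv ℝ (fderiv ℝ u) p).flip v) p := by
  have h2 : ContDiffAt ℝ 1 (fderiv ℝ u) p := hu.fderiv_right (by norm_num)
  have hd : DifferentiableAt ℝ (fderiv ℝ u) p := h2.differentiableAt one_ne_zero
  simpa using hd.hasFDerivAt.clm_apply (hasFDerivAt_const v p)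

lemma hess_eq {u : ℝ × ℝ → ℝ} {p : ℝ × ℝ} (hu : ContDiffAt ℝ 2 u p) (v w : ℝ × ℝ) :
    hess u v w p = fderiv ℝ (fderiv ℝ u) p w v := by
  unfold hess
  rw [(hess_hasFDerivAt hu v).fderiv]
  rfl

/-- Differentiating the Neumann condition `⟨Du, ν⟩ = g(ν)` along a level
curve yields `D²u(γ', ν) = -κ ⟨Dg(ν), γ'⟩`, where `ν = Jγ'` and `κ = ⟨γ'', ν⟩`. -/
theorem neumann_derivative_identity
    (Ω : Set (ℝ × ℝ)) (hΩ : IsOpen Ω)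
    (u : ℝ × ℝ → ℝ) (hu : ContDiffOn ℝ 2 u Ω)
    (I : Set ℝ) (hI : IsOpen I)
    (γ : ℝ → ℝ × ℝ) (hγ : ContDiffOn ℝ 2 γ I) (hγΩ : ∀ s ∈ I, γ s ∈ Ω)
    (harc : ∀ s ∈ I, dot (deriv γ s) (deriv γ s) = 1)
    (hzero : ∀ s ∈ I, u (γ s) = 0)
    (g : ℝ × ℝ → ℝ) (Ug : Set (ℝ × ℝ)) (hUg : IsOpen Ug)
    (hUg1 : {w : ℝ × ℝ | dot w w = 1} ⊆ Ug) (hg : ContDiffOn ℝ 1 g Ug)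
    (hNeu : ∀ s ∈ I, dot (grad u (γ s)) (Jrot (deriv γ s)) = g (Jrot (deriv γ s))) :
    ∀ s ∈ I, hess u (deriv γ s) (Jrot (deriv γ s)) (γ s) =
      -(dot (deriv (deriv γ) s) (Jrot (deriv γ s))) *
        dot (grad g (Jrot (deriv γ s))) (deriv γ s) := by
  intro s₀ hs₀
  have hp : γ s₀ ∈ Ω := hγΩ s₀ hs₀
  have hus : ContDiffAt ℝ 2 u (γ s₀) := hu.contDiffAt (hΩ.mem_nhds hp)
  have hγs : ContDiffAt ℝ 2 γ s₀ := hγ.contDiffAt (hI.mem_nhds hs₀)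
  have hγ' : HasDerivAt γ (deriv γ s₀) s₀ :=
    (hγs.differentiableAt (by norm_num)).hasDerivAt
  have hdγ : ContDiffOn ℝ 1 (deriv γ) I := hγ.deriv_of_isOpen hI (by norm_num)
  have hγ'' : HasDerivAt (deriv γ) (deriv (deriv γ) s₀) s₀ :=
    ((hdγ.contDiffAt (hI.mem_nhds hs₀)).differentiableAt one_ne_zero).hasDerivAt
  -- components of the velocity/acceleration
  have hfst : HasDerivAt (fun s => (deriv γ s).1) (deriv (deriv γ) s₀).1 s₀ :=
    (ContinuousLinearMap.fst ℝ ℝ ℝ).hasFDerivAt.comp_hasDerivAt s₀ hγ''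
  have hsnd : HasDerivAt (fun s => (deriv γ s).2) (deriv (deriv γ) s₀).2 s₀ :=
    (ContinuousLinearMap.snd ℝ ℝ ℝ).hasFDerivAt.comp_hasDerivAt s₀ hγ''
  -- derivative of the partials of u along γ
  have hpx : HasDerivAt (fun s => px u (γ s))
      (fderiv ℝ (fderiv ℝ u) (γ s₀) (deriv γ s₀) (1, 0)) s₀ :=
    (hess_hasFDerivAt hus ((1:ℝ), (0:ℝ))).comp_hasDerivAt s₀ hγ'
  have hpy : HasDerivAt (fun s => py u (γ s))
      (fderiv ℝ (fderiv ℝ u) (γ s₀) (deriv γ s₀) (0, 1)) s₀ :=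
    (hess_hasFDerivAt hus ((0:ℝ), (1:ℝ))).comp_hasDerivAt s₀ hγ'
  -- derivative of ν = Jγ'
  have hν1 : HasDerivAt (fun s => Jrot (deriv γ s)) (Jrot (deriv (deriv γ) s₀)) s₀ :=
    HasDerivAt.prodMk (hsnd.neg) hfst
  have hνUg : Jrot (deriv γ s₀) ∈ Ug := by
    apply hUg1
    have h1 := harc s₀ hs₀
    simp only [dot, Jrot, Set.mem_setOf_eq] at *
    nlinarith [h1]
  have hgd : DifferentiableAt ℝ g (Jrot (deriv γ s₀)) :=
    (hg.contDiffAt (hUg.mem_nhds hνUg)).differentiableAt one_ne_zero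
  have hG : HasDerivAt (fun s => g (Jrot (deriv γ s)))
      (fderiv ℝ g (Jrot (deriv γ s₀)) (Jrot (deriv (deriv γ) s₀))) s₀ :=
    hgd.hasFDerivAt.comp_hasDerivAt s₀ hν1
  -- derivative of the left side of the Neumann condition
  have hF : HasDerivAt (fun s => dot (grad u (γ s)) (Jrot (deriv γ s)))
      (fderiv ℝ (fderiv ℝ u) (γ s₀) (deriv γ s₀) (1, 0) * (-(deriv γ s₀).2)
        + px u (γ s₀) * (-(deriv (deriv γ) s₀).2)
        + (fderiv ℝ (fderiv ℝ u) (γ s₀) (deriv γ s₀) (0, 1) * (deriv γ s₀).1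
            + py u (γ s₀) * (deriv (deriv γ) s₀).1)) s₀ :=
    (hpx.mul hsnd.neg).add (hpy.mul hfst)
  have hEq : (fun s => dot (grad u (γ s)) (Jrot (deriv γ s))) =ᶠ[nhds s₀]
      (fun s => g (Jrot (deriv γ s))) := by
    filter_upwards [hI.mem_nhds hs₀] with t ht using hNeu t ht
  have E4 := (hG.congr_of_eventuallyEq hEq).unique hF
  -- derivative of u ∘ γ = 0
  have hu1 : HasFDerivAt u (fderiv ℝ u (γ s₀)) (γ s₀) :=
    (hus.differentiableAt (by norm_num)).hasFDerivAt
  have hc : HasDerivAt (fun s => u (γ s)) (fderiv ℝ u (γ s₀) (deriv γ s₀)) s₀ :=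
    hu1.comp_hasDerivAt s₀ hγ'
  have hzeq : (fun s => u (γ s)) =ᶠ[nhds s₀] (fun _ => (0:ℝ)) := by
    filter_upwards [hI.mem_nhds hs₀] with t ht using hzero t ht
  have E1' : fderiv ℝ u (γ s₀) (deriv γ s₀) = 0 :=
    (hc.congr_of_eventuallyEq hzeq.symm).unique (hasDerivAt_const s₀ 0)
  have E1 : (deriv γ s₀).1 * fderiv ℝ u (γ s₀) (1, 0)
      + (deriv γ s₀).2 * fderiv ℝ u (γ s₀) (0, 1) = 0 := by
    rw [← clm_apply_expand (fderiv ℝ u (γ s₀)) (deriv γ s₀)]; exact E1'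
  -- derivative of the arclength condition
  have harcEq : (fun s => (deriv γ s).1 * (deriv γ s).1 + (deriv γ s).2 * (deriv γ s).2)
      =ᶠ[nhds s₀] (fun _ => (1:ℝ)) := by
    filter_upwards [hI.mem_nhds hs₀] with t ht using harc t ht
  have hA : HasDerivAt (fun s => (deriv γ s).1 * (deriv γ s).1 + (deriv γ s).2 * (deriv γ s).2)
      ((deriv (deriv γ) s₀).1 * (deriv γ s₀).1 + (deriv γ s₀).1 * (deriv (deriv γ) s₀).1
        + ((deriv (deriv γ) s₀).2 * (deriv γ s₀).2 + (deriv γ s₀).2 * (deriv (deriv γ) s₀).2)) s₀ :=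
    (hfst.mul hfst).add (hsnd.mul hsnd)
  have E2 := hA.unique ((hasDerivAt_const s₀ (1:ℝ)).congr_of_eventuallyEq harcEq)
  have E3 : (deriv γ s₀).1 * (deriv γ s₀).1 + (deriv γ s₀).2 * (deriv γ s₀).2 = 1 := harc s₀ hs₀
  -- symmetry of the Hessian and expansion
  have hsymExpand : hess u (deriv γ s₀) (Jrot (deriv γ s₀)) (γ s₀)
      = (-(deriv γ s₀).2) * fderiv ℝ (fderiv ℝ u) (γ s₀) (deriv γ s₀) (1, 0)
        + (deriv γ s₀).1 * fderiv ℝ (fderiv ℝ u) (γ s₀) (deriv γ s₀) (0, 1) := by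
    rw [hess_eq hus, (hus.isSymmSndFDerivAt (by simp)).eq (Jrot (deriv γ s₀)) (deriv γ s₀),
      clm_apply_expand (fderiv ℝ (fderiv ℝ u) (γ s₀) (deriv γ s₀)) (Jrot (deriv γ s₀))]
    rfl
  -- expand the g-derivative
  have E4' : (-(deriv (deriv γ) s₀).2) * fderiv ℝ g (Jrot (deriv γ s₀)) (1, 0)
      + (deriv (deriv γ) s₀).1 * fderiv ℝ g (Jrot (deriv γ s₀)) (0, 1)
      = fderiv ℝ (fderiv ℝ u) (γ s₀) (deriv γ s₀) (1, 0) * (-(deriv γ s₀).2)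
        + px u (γ s₀) * (-(deriv (deriv γ) s₀).2)
        + (fderiv ℝ (fderiv ℝ u) (γ s₀) (deriv γ s₀) (0, 1) * (deriv γ s₀).1
            + py u (γ s₀) * (deriv (deriv γ) s₀).1) := by
    rw [clm_apply_expand (fderiv ℝ g (Jrot (deriv γ s₀))) (Jrot (deriv (deriv γ) s₀))] at E4
    exact E4
  rw [hsymExpand]
  show (-(deriv γ s₀).2) * fderiv ℝ (fderiv ℝ u) (γ s₀) (deriv γ s₀) (1, 0)
      + (deriv γ s₀).1 * fderiv ℝ (fderiv ℝ u) (γ s₀) (deriv γ s₀) (0, 1)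
    = -((deriv (deriv γ) s₀).1 * (-(deriv γ s₀).2) + (deriv (deriv γ) s₀).2 * (deriv γ s₀).1)
        * (fderiv ℝ g (Jrot (deriv γ s₀)) (1, 0) * (deriv γ s₀).1
            + fderiv ℝ g (Jrot (deriv γ s₀)) (0, 1) * (deriv γ s₀).2)
  -- κ-identities
  have hJ1 : (deriv (deriv γ) s₀).2
      = ((deriv (deriv γ) s₀).1 * (-(deriv γ s₀).2) + (deriv (deriv γ) s₀).2 * (deriv γ s₀).1)
        * (deriv γ s₀).1 := by
    linear_combination ((deriv γ s₀).2 / 2) * E2 - (deriv (deriv γ) s₀).2 * E3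
  have hJ2 : (deriv (deriv γ) s₀).1
      = -(((deriv (deriv γ) s₀).1 * (-(deriv γ s₀).2) + (deriv (deriv γ) s₀).2 * (deriv γ s₀).1)
        * (deriv γ s₀).2) := by
    linear_combination ((deriv γ s₀).1 / 2) * E2 - (deriv (deriv γ) s₀).1 * E3
  have hpxe : px u (γ s₀) = fderiv ℝ u (γ s₀) (1, 0) := rfl
  have hpye : py u (γ s₀) = fderiv ℝ u (γ s₀) (0, 1) := rfl
  rw [hpxe, hpye] at E4'
  linear_combination -E4'
    + (fderiv ℝ u (γ s₀) (1, 0) - fderiv ℝ g (Jrot (deriv γ s₀)) (1, 0)) * hJ1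
    + (fderiv ℝ g (Jrot (deriv γ s₀)) (0, 1) - fderiv ℝ u (γ s₀) (0, 1)) * hJ2
    + ((deriv (deriv γ) s₀).1 * (-(deriv γ s₀).2)
        + (deriv (deriv γ) s₀).2 * (deriv γ s₀).1) * E1
end

section
/- Let u, v be C² functions defined on a neighborhood of a point p ∈ ℝ², and let γ, γ̃ : (−δ, δ) → ℝ² be C² curves parametrized by arc length with γ(0) = γ̃(0) = p and γ'(0) = γ̃'(0) = w. Set ν := Jγ', ν̃ := Jγ̃' (J the counterclockwise rotation by π/2), and let κ := ⟨γ''(0), ν(0)⟩, κ̃ := ⟨γ̃''(0), ν̃(0)⟩ be the signed curvatures at p. Suppose u(γ(s)) = 0 and v(γ̃(s)) = 0 for all s, and that there is a C¹ function g on a neighborhood of 𝕊¹ ⊂ ℝ² with ⟨Du(γ(s)), ν(s)⟩ = g(ν(s)) and ⟨Dv(γ̃(s)), ν̃(s)⟩ = g(ν̃(s)) for all s. If κ̃ ≠ 0, then D²u_p(w, Y) = (κ/κ̃) · D²v_p(w, Y) for every Y ∈ ℝ². -/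
open Set

lemma clm_eq_dot (L : (ℝ × ℝ) →L[ℝ] ℝ) (x : ℝ × ℝ) :
    L x = x.1 * L (1, 0) + x.2 * L (0, 1) := by
  have hx : x = x.1 • ((1:ℝ), (0:ℝ)) + x.2 • ((0:ℝ), (1:ℝ)) := by
    ext <;> simp
  conv_lhs => rw [hx]
  rw [map_add, map_smul, map_smul]
  simp [smul_eq_mul]

lemma decomp (w z : ℝ × ℝ) (hw : dot w w = 1) :
    z = dot z w • w + dot z (Jrot w) • Jrot w := by
  obtain ⟨w1, w2⟩ := w; obtain ⟨z1, z2⟩ := z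
  simp only [dot, Jrot, Prod.smul_mk, smul_eq_mul, Prod.mk_add_mk, Prod.mk.injEq] at *
  constructor
  · linear_combination -z1 * hw
  · linear_combination -z2 * hw

lemma aux_curve
    (Ω : Set (ℝ × ℝ)) (hΩ : IsOpen Ω) (p : ℝ × ℝ) (hp : p ∈ Ω)
    (u : ℝ × ℝ → ℝ) (hu : ContDiffOn ℝ 2 u Ω)
    (δ : ℝ) (hδ : 0 < δ)
    (γ : ℝ → ℝ × ℝ) (hγ : ContDiffOn ℝ 2 γ (Ioo (-δ) δ))
    (hγΩ : ∀ s ∈ Ioo (-δ) δ, γ s ∈ Ω) (hγ0 : γ 0 = p)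
    (harc : ∀ s ∈ Ioo (-δ) δ, dot (deriv γ s) (deriv γ s) = 1)
    (hzu : ∀ s ∈ Ioo (-δ) δ, u (γ s) = 0)
    (g : ℝ × ℝ → ℝ) (Ug : Set (ℝ × ℝ)) (hUg : IsOpen Ug)
    (hUg1 : {z : ℝ × ℝ | dot z z = 1} ⊆ Ug) (hg : ContDiffOn ℝ 1 g Ug)
    (hNu : ∀ s ∈ Ioo (-δ) δ,
      dot ((fderiv ℝ u (γ s) (1,0), fderiv ℝ u (γ s) (0,1))) (Jrot (deriv γ s))
        = g (Jrot (deriv γ s))) :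
    fderiv ℝ (fderiv ℝ u) p (deriv γ 0) (deriv γ 0)
      = -(dot (deriv (deriv γ) 0) (Jrot (deriv γ 0)) * g (Jrot (deriv γ 0))) ∧
    fderiv ℝ (fderiv ℝ u) p (deriv γ 0) (Jrot (deriv γ 0))
      = -(dot (deriv (deriv γ) 0) (Jrot (deriv γ 0)) *
          fderiv ℝ g (Jrot (deriv γ 0)) (deriv γ 0)) := by
  have h0mem : (0:ℝ) ∈ Ioo (-δ) δ := by constructor <;> simp [hδ] <;> linarith
  set w : ℝ × ℝ := deriv γ 0 with hwdef
  set a : ℝ × ℝ := deriv (deriv γ) 0 with hadef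
  set κ : ℝ := dot a (Jrot w) with hκdef
  -- differentiability facts
  have hudiff : ∀ s ∈ Ioo (-δ) δ, DifferentiableAt ℝ u (γ s) := fun s hs =>
    ((hu.contDiffAt (hΩ.mem_nhds (hγΩ s hs))).differentiableAt two_ne_zero)
  have hγd : ∀ s ∈ Ioo (-δ) δ, HasDerivAt γ (deriv γ s) s := fun s hs =>
    ((hγ.contDiffAt (isOpen_Ioo.mem_nhds hs)).differentiableAt two_ne_zero).hasDerivAt
  have hγ'C1 : ContDiffOn ℝ 1 (deriv γ) (Ioo (-δ) δ) :=
    hγ.deriv_of_isOpen isOpen_Ioo (by norm_num)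
  have hγ'd0 : HasDerivAt (deriv γ) a 0 :=
    ((hγ'C1.contDiffAt (isOpen_Ioo.mem_nhds h0mem)).differentiableAt one_ne_zero).hasDerivAt
  have d1 : HasDerivAt (fun s => (deriv γ s).1) a.1 0 := hγ'd0.fst
  have d2 : HasDerivAt (fun s => (deriv γ s).2) a.2 0 := hγ'd0.snd
  -- second derivative of u at p
  have hf''d : DifferentiableAt ℝ (fderiv ℝ u) p :=
    ((hu.contDiffAt (hΩ.mem_nhds hp)).fderiv_right (m := 1) one_add_one_eq_two.le).differentiableAt one_ne_zero
  set H : (ℝ × ℝ) →L[ℝ] (ℝ × ℝ) →L[ℝ] ℝ := fderiv ℝ (fderiv ℝ u) p with hHdef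
  -- derivative of s ↦ ∂ₑu(γ s) at 0
  have hline : ∀ e : ℝ × ℝ, HasDerivAt (fun s => fderiv ℝ u (γ s) e) (H w e) 0 := by
    intro e
    have h1 : HasFDerivAt (fun q => fderiv ℝ u q e)
        ((ContinuousLinearMap.apply ℝ ℝ e).comp H) (γ 0) := by
      rw [hγ0]
      exact (ContinuousLinearMap.apply ℝ ℝ e).hasFDerivAt.comp p hf''d.hasFDerivAt
    have := h1.comp_hasDerivAt 0 (hγd 0 h0mem)
    exact this
  -- step 1 : tangential derivative vanishes along γ
  have step1 : ∀ s ∈ Ioo (-δ) δ, fderiv ℝ u (γ s) (deriv γ s) = 0 := by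
    intro s hs
    have hc : HasDerivAt (fun t => u (γ t)) (fderiv ℝ u (γ s) (deriv γ s)) s :=
      (hudiff s hs).hasFDerivAt.comp_hasDerivAt s (hγd s hs)
    have hz : HasDerivAt (fun t => u (γ t)) 0 s := by
      have hev : (fun t => u (γ t)) =ᶠ[nhds s] fun _ => (0:ℝ) := by
        filter_upwards [isOpen_Ioo.mem_nhds hs] with t ht using hzu t ht
      exact HasDerivAt.congr_of_eventuallyEq (hasDerivAt_const s (0:ℝ)) hev
    exact hc.unique hz
  -- a is orthogonal to w
  have haw : dot a w = 0 := by
    have hψ : HasDerivAt (fun s => dot (deriv γ s) (deriv γ s))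
        (a.1 * w.1 + w.1 * a.1 + (a.2 * w.2 + w.2 * a.2)) 0 := by
      have := (d1.mul d1).add (d2.mul d2)
      exact this
    have hz : HasDerivAt (fun s => dot (deriv γ s) (deriv γ s)) 0 0 := by
      have hev : (fun s => dot (deriv γ s) (deriv γ s)) =ᶠ[nhds (0:ℝ)] fun _ => (1:ℝ) := by
        filter_upwards [isOpen_Ioo.mem_nhds h0mem] with t ht using harc t ht
      exact HasDerivAt.congr_of_eventuallyEq (hasDerivAt_const 0 (1:ℝ)) hev
    have := hψ.unique hz
    simp only [dot]
    linarith
  have hww : dot w w = 1 := harc 0 h0mem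
  -- a = κ • Jrot w
  have hadcmp : a = κ • Jrot w := by
    have := decomp w a hww
    rw [haw] at this
    simpa [← hκdef] using this
  have ha1 : a.1 = κ * (-w.2) := by rw [hadcmp]; simp [Jrot]
  have ha2 : a.2 = κ * w.1 := by rw [hadcmp]; simp [Jrot]
  -- gradient relations at p
  have hgradw : fderiv ℝ u p (1,0) * w.1 + fderiv ℝ u p (0,1) * w.2 = 0 := by
    have := step1 0 h0mem
    rw [hγ0] at this
    have h2 := clm_eq_dot (fderiv ℝ u p) w
    rw [this] at h2
    linarith
  have hgradν : fderiv ℝ u p (1,0) * (-w.2) + fderiv ℝ u p (0,1) * w.1 = g (Jrot w) := by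
    have := hNu 0 h0mem
    rw [hγ0] at this
    simpa [dot, Jrot] using this
  -- equation E1 from differentiating the tangential relation
  have E1 : H w (1,0) * w.1 + fderiv ℝ u p (1,0) * a.1
      + (H w (0,1) * w.2 + fderiv ℝ u p (0,1) * a.2) = 0 := by
    have hG : HasDerivAt
        (fun s => fderiv ℝ u (γ s) (1,0) * (deriv γ s).1
          + fderiv ℝ u (γ s) (0,1) * (deriv γ s).2)
        (H w (1,0) * w.1 + fderiv ℝ u (γ 0) (1,0) * a.1
          + (H w (0,1) * w.2 + fderiv ℝ u (γ 0) (0,1) * a.2)) 0 :=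
      ((hline (1,0)).mul d1).add ((hline (0,1)).mul d2)
    have hz : HasDerivAt
        (fun s => fderiv ℝ u (γ s) (1,0) * (deriv γ s).1
          + fderiv ℝ u (γ s) (0,1) * (deriv γ s).2) 0 0 := by
      have hev : (fun s => fderiv ℝ u (γ s) (1,0) * (deriv γ s).1
          + fderiv ℝ u (γ s) (0,1) * (deriv γ s).2) =ᶠ[nhds (0:ℝ)] fun _ => (0:ℝ) := by
        filter_upwards [isOpen_Ioo.mem_nhds h0mem] with t ht
        have h2 := clm_eq_dot (fderiv ℝ u (γ t)) (deriv γ t)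
        rw [step1 t ht] at h2
        linarith
      exact HasDerivAt.congr_of_eventuallyEq (hasDerivAt_const 0 (0:ℝ)) hev
    have := hG.unique hz
    rwa [hγ0] at this
  -- derivative of the Neumann relation
  have hJwUg : Jrot w ∈ Ug := by
    apply hUg1
    simp only [mem_setOf_eq, dot, Jrot]
    simp only [dot] at hww
    linear_combination hww
  have hgd : DifferentiableAt ℝ g (Jrot w) :=
    (hg.contDiffAt (hUg.mem_nhds hJwUg)).differentiableAt one_ne_zero
  have hinner : HasDerivAt (fun s => ((-(deriv γ s).2, (deriv γ s).1) : ℝ × ℝ))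
      (-a.2, a.1) 0 := HasDerivAt.prodMk d2.neg d1
  have hH2 : HasDerivAt (fun s => g ((-(deriv γ s).2, (deriv γ s).1)))
      (fderiv ℝ g (Jrot w) (-a.2, a.1)) 0 := by
    exact hgd.hasFDerivAt.comp_hasDerivAt 0 hinner
  have E2 : H w (1,0) * (-w.2) + fderiv ℝ u p (1,0) * (-a.2)
      + (H w (0,1) * w.1 + fderiv ℝ u p (0,1) * a.1)
      = fderiv ℝ g (Jrot w) (-a.2, a.1) := by
    have hG : HasDerivAt
        (fun s => fderiv ℝ u (γ s) (1,0) * (-(deriv γ s).2)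
          + fderiv ℝ u (γ s) (0,1) * (deriv γ s).1)
        (H w (1,0) * (-w.2) + fderiv ℝ u (γ 0) (1,0) * (-a.2)
          + (H w (0,1) * w.1 + fderiv ℝ u (γ 0) (0,1) * a.1)) 0 :=
      ((hline (1,0)).mul d2.neg).add ((hline (0,1)).mul d1)
    have hG' : HasDerivAt
        (fun s => fderiv ℝ u (γ s) (1,0) * (-(deriv γ s).2)
          + fderiv ℝ u (γ s) (0,1) * (deriv γ s).1)
        (fderiv ℝ g (Jrot w) (-a.2, a.1)) 0 := by
      apply hH2.congr_of_eventuallyEq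
      filter_upwards [isOpen_Ioo.mem_nhds h0mem] with t ht
      have := hNu t ht
      simp [dot, Jrot] at this
      linarith [this]
    have := hG.unique hG'
    rwa [hγ0] at this
  -- right-hand side of E2
  have hRHS2 : fderiv ℝ g (Jrot w) (-a.2, a.1) = -κ * fderiv ℝ g (Jrot w) w := by
    have hv : ((-a.2, a.1) : ℝ × ℝ) = (-κ) • w := by
      rw [ha1, ha2]; ext <;> simp <;> ring
    rw [hv, map_smul, smul_eq_mul]
  constructor
  · rw [clm_eq_dot (H w) w]
    rw [ha1, ha2] at E1
    linear_combination E1 - κ * hgradν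
  · rw [clm_eq_dot (H w) (Jrot w)]
    rw [hRHS2] at E2
    rw [ha1, ha2] at E2
    have hJ1 : (Jrot w).1 = -w.2 := rfl
    have hJ2 : (Jrot w).2 = w.1 := rfl
    rw [hJ1, hJ2]
    linear_combination E2 + κ * hgradw

lemma hess_repr (u : ℝ × ℝ → ℝ) (p : ℝ × ℝ)
    (hd : DifferentiableAt ℝ (fderiv ℝ u) p) (x y : ℝ × ℝ) :
    hess u x y p = fderiv ℝ (fderiv ℝ u) p y x := by
  have h1 : HasFDerivAt (fun q => fderiv ℝ u q x)
      ((ContinuousLinearMap.apply ℝ ℝ x).comp (fderiv ℝ (fderiv ℝ u) p)) p :=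
    (ContinuousLinearMap.apply ℝ ℝ x).hasFDerivAt.comp p hd.hasFDerivAt
  rw [hess, h1.fderiv]
  simp

/-- If `u`, `v` have level curves through `p` with common tangent `w`,
satisfying the same Neumann condition `⟨D·, ν⟩ = g(ν)`, and the curvature `κ̃` of the
`v`-curve at `p` is nonzero, then `D²u_p(w, Y) = (κ/κ̃) D²v_p(w, Y)` for every `Y`. -/
theorem common_tangent_hessian_proportionality
    (Ω : Set (ℝ × ℝ)) (hΩ : IsOpen Ω) (p : ℝ × ℝ) (hp : p ∈ Ω)
    (u v : ℝ × ℝ → ℝ) (hu : ContDiffOn ℝ 2 u Ω) (hv : ContDiffOn ℝ 2 v Ω)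
    (δ : ℝ) (hδ : 0 < δ)
    (γ γt : ℝ → ℝ × ℝ)
    (hγ : ContDiffOn ℝ 2 γ (Ioo (-δ) δ)) (hγt : ContDiffOn ℝ 2 γt (Ioo (-δ) δ))
    (hγΩ : ∀ s ∈ Ioo (-δ) δ, γ s ∈ Ω) (hγtΩ : ∀ s ∈ Ioo (-δ) δ, γt s ∈ Ω)
    (hγ0 : γ 0 = p) (hγt0 : γt 0 = p)
    (w : ℝ × ℝ) (hw : deriv γ 0 = w) (hwt : deriv γt 0 = w)
    (harc : ∀ s ∈ Ioo (-δ) δ, dot (deriv γ s) (deriv γ s) = 1)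
    (harct : ∀ s ∈ Ioo (-δ) δ, dot (deriv γt s) (deriv γt s) = 1)
    (hzu : ∀ s ∈ Ioo (-δ) δ, u (γ s) = 0)
    (hzv : ∀ s ∈ Ioo (-δ) δ, v (γt s) = 0)
    (g : ℝ × ℝ → ℝ) (Ug : Set (ℝ × ℝ)) (hUg : IsOpen Ug)
    (hUg1 : {z : ℝ × ℝ | dot z z = 1} ⊆ Ug) (hg : ContDiffOn ℝ 1 g Ug)
    (hNu : ∀ s ∈ Ioo (-δ) δ,
      dot (grad u (γ s)) (Jrot (deriv γ s)) = g (Jrot (deriv γ s)))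
    (hNv : ∀ s ∈ Ioo (-δ) δ,
      dot (grad v (γt s)) (Jrot (deriv γt s)) = g (Jrot (deriv γt s)))
    (hκt : dot (deriv (deriv γt) 0) (Jrot (deriv γt 0)) ≠ 0) :
    ∀ Y : ℝ × ℝ, hess u w Y p =
      (dot (deriv (deriv γ) 0) (Jrot (deriv γ 0)) /
        dot (deriv (deriv γt) 0) (Jrot (deriv γt 0))) * hess v w Y p := by
  intro Y
  have h0mem : (0:ℝ) ∈ Ioo (-δ) δ := by constructor <;> simp [hδ] <;> linarith
  obtain ⟨Eu1, Eu2⟩ := aux_curve Ω hΩ p hp u hu δ hδ γ hγ hγΩ hγ0 harc hzu g Ug hUg hUg1 hg hNu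
  obtain ⟨Ev1, Ev2⟩ := aux_curve Ω hΩ p hp v hv δ hδ γt hγt hγtΩ hγt0 harct hzv g Ug hUg hUg1 hg hNv
  rw [hw] at Eu1 Eu2
  rw [hwt] at Ev1 Ev2 hκt
  rw [hw, hwt]
  set κ1 : ℝ := dot (deriv (deriv γ) 0) (Jrot w) with hκ1
  set κ2 : ℝ := dot (deriv (deriv γt) 0) (Jrot w) with hκ2
  have hww : dot w w = 1 := by have := harc 0 h0mem; rwa [hw] at this
  have hY := decomp w Y hww
  -- second derivative data
  have hf''du : DifferentiableAt ℝ (fderiv ℝ u) p :=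
    ((hu.contDiffAt (hΩ.mem_nhds hp)).fderiv_right (m := 1) one_add_one_eq_two.le).differentiableAt one_ne_zero
  have hf''dv : DifferentiableAt ℝ (fderiv ℝ v) p :=
    ((hv.contDiffAt (hΩ.mem_nhds hp)).fderiv_right (m := 1) one_add_one_eq_two.le).differentiableAt one_ne_zero
  have hevu : ∀ᶠ y in nhds p, HasFDerivAt u (fderiv ℝ u y) y := by
    filter_upwards [hΩ.mem_nhds hp] with q hq using
      ((hu.contDiffAt (hΩ.mem_nhds hq)).differentiableAt two_ne_zero).hasFDerivAt
  have hevv : ∀ᶠ y in nhds p, HasFDerivAt v (fderiv ℝ v y) y := by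
    filter_upwards [hΩ.mem_nhds hp] with q hq using
      ((hv.contDiffAt (hΩ.mem_nhds hq)).differentiableAt two_ne_zero).hasFDerivAt
  have hsymu := second_derivative_symmetric_of_eventually hevu hf''du.hasFDerivAt
  have hsymv := second_derivative_symmetric_of_eventually hevv hf''dv.hasFDerivAt
  have expand : ∀ (L : (ℝ × ℝ) →L[ℝ] ℝ),
      L Y = dot Y w * L w + dot Y (Jrot w) * L (Jrot w) := by
    intro L
    conv_lhs => rw [hY]
    rw [map_add, map_smul, map_smul]
    simp [smul_eq_mul]
  have eu : hess u w Y p = dot Y w * (-(κ1 * g (Jrot w)))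
      + dot Y (Jrot w) * (-(κ1 * fderiv ℝ g (Jrot w) w)) := by
    rw [hess_repr u p hf''du w Y, hsymu Y w, ← Eu1, ← Eu2]
    exact expand _
  have ev : hess v w Y p = dot Y w * (-(κ2 * g (Jrot w)))
      + dot Y (Jrot w) * (-(κ2 * fderiv ℝ g (Jrot w) w)) := by
    rw [hess_repr v p hf''dv w Y, hsymv Y w, ← Ev1, ← Ev2]
    exact expand _
  rw [eu, ev]
  field_simp
end

section
/- Let h be a nonzero harmonic homogeneous polynomial of degree n ≥ 3 in two real variables. Then the determinant of the Hessian of h is negative away from the origin: det(D²h)(q) = −(h_{xx}(q)² + h_{xy}(q)²) < 0 for every q ∈ ℝ², q ≠ (0,0). -/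
open MvPolynomial

private lemma pderiv_comm2 (i j : Fin 2) (p : MvPolynomial (Fin 2) ℝ) :
    pderiv i (pderiv j p) = pderiv j (pderiv i p) := by
  induction p using MvPolynomial.induction_on' with
  | monomial s a =>
    simp only [pderiv_monomial]
    rcases eq_or_ne i j with rfl | hij
    · rfl
    · have hd : (s - Finsupp.single j 1) - Finsupp.single i 1
          = (s - Finsupp.single i 1) - Finsupp.single j 1 := by
        ext k
        simp only [Finsupp.coe_tsub, Pi.sub_apply]
        omega
      rw [hd]
      congr 1
      rw [Finsupp.tsub_apply, Finsupp.tsub_apply, Finsupp.single_apply, Finsupp.single_apply,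
        if_neg (Ne.symm hij), if_neg hij, Nat.sub_zero, Nat.sub_zero]
      ring
  | add p q hp hq => simp [hp, hq]

private lemma X_mul_pderiv_monomial (i : Fin 2) (s : Fin 2 →₀ ℕ) (a : ℝ) :
    X i * pderiv i (monomial s a) = ((s i : ℝ)) • monomial s a := by
  rw [pderiv_monomial]
  rcases Nat.eq_zero_or_pos (s i) with h0 | hpos
  · simp [h0]
  · have hss : Finsupp.single i 1 + (s - Finsupp.single i 1) = s := by
      ext k
      rcases eq_or_ne k i with rfl | hk
      · simp only [Finsupp.add_apply, Finsupp.tsub_apply, Finsupp.single_eq_same]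
        omega
      · simp [Finsupp.single_eq_of_ne' (Ne.symm hk)]
    rw [X, monomial_mul, one_mul, hss, smul_monomial]
    congr 1
    rw [smul_eq_mul]
    ring

private lemma euler2 {m : ℕ} {p : MvPolynomial (Fin 2) ℝ} (hp : p.IsHomogeneous m) :
    X 0 * pderiv 0 p + X 1 * pderiv 1 p = (m : ℝ) • p := by
  conv_lhs => rw [p.as_sum]
  conv_rhs => rw [p.as_sum]
  rw [map_sum (pderiv 0), map_sum (pderiv 1), Finset.mul_sum, Finset.mul_sum,
    ← Finset.sum_add_distrib, Finset.smul_sum]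
  refine Finset.sum_congr rfl fun s hs => ?_
  rw [X_mul_pderiv_monomial, X_mul_pderiv_monomial]
  have hdeg : s.degree = m := by
    rw [Finsupp.degree_eq_weight_one]; exact hp (mem_support_iff.mp hs)
  have : s 0 + s 1 = m := by
    rw [← hdeg, Finsupp.degree_apply,
      Finset.sum_subset (Finset.subset_univ s.support)
        (fun i _ hi => Finsupp.notMem_support_iff.mp hi), Fin.sum_univ_two]
  rw [← this]
  push_cast
  rw [add_smul]

private lemma degree2 (d : Fin 2 →₀ ℕ) : d.degree = d 0 + d 1 := by
  rw [Finsupp.degree_apply, Finset.sum_subset (Finset.subset_univ d.support)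
    (fun i _ hi => Finsupp.notMem_support_iff.mp hi), Fin.sum_univ_two]

private lemma pderiv_homog {m : ℕ} {p : MvPolynomial (Fin 2) ℝ} (i : Fin 2)
    (hp : p.IsHomogeneous (m + 1)) : (pderiv i p).IsHomogeneous m := by
  conv_lhs => rw [p.as_sum]
  rw [map_sum]
  refine IsHomogeneous.sum _ _ _ fun s hs => ?_
  rw [pderiv_monomial]
  rcases Nat.eq_zero_or_pos (s i) with h0 | hpos
  · rw [h0]
    norm_num
    exact isHomogeneous_zero _ _ _
  · apply isHomogeneous_monomial
    have hdeg : s.degree = m + 1 := by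
      rw [Finsupp.degree_eq_weight_one]; exact hp (mem_support_iff.mp hs)
    rw [degree2] at hdeg
    rw [degree2]
    simp only [Finsupp.coe_tsub, Pi.sub_apply]
    have hi : i = 0 ∨ i = 1 := by fin_cases i <;> simp
    rcases hi with rfl | rfl <;> simp [Finsupp.single_apply] <;> omega

private lemma euler_eval {m : ℕ} {p : MvPolynomial (Fin 2) ℝ} (hp : p.IsHomogeneous m)
    (v : Fin 2 → ℝ) :
    v 0 * eval v (pderiv 0 p) + v 1 * eval v (pderiv 1 p) = m * eval v p := by
  have := congrArg (eval v) (euler2 hp)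
  rw [smul_eq_C_mul] at this
  simpa using this

private lemma homog0 {u : MvPolynomial (Fin 2) ℝ} (hu : u.IsHomogeneous 0) :
    u = C (coeff 0 u) := by
  ext d
  rcases eq_or_ne d 0 with rfl | hd
  · simp
  · rw [coeff_C, if_neg (Ne.symm hd)]
    by_contra hc
    have h1 : (Finsupp.weight 1) d = 0 := hu hc
    change (Finsupp.weight (fun _ => 1)) d = 0 at h1
    rw [← Finsupp.degree_eq_weight_one, Finsupp.degree_eq_zero_iff] at h1
    exact hd h1

private lemma smul_zero_cancel {c : ℝ} (hc : c ≠ 0) {k : MvPolynomial (Fin 2) ℝ}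
    (h : c • k = 0) : k = 0 := by
  have h2 := congrArg (c⁻¹ • ·) h
  simpa [smul_smul, inv_mul_cancel₀ hc] using h2

private lemma eq_zero_of_pd0 {m : ℕ} {p : MvPolynomial (Fin 2) ℝ} (hm : 2 ≤ m)
    (hp : p.IsHomogeneous m)
    (hharm : pderiv 0 (pderiv 0 p) + pderiv 1 (pderiv 1 p) = 0)
    (hx : pderiv 0 p = 0) : p = 0 := by
  obtain ⟨m', rfl⟩ : ∃ m', m = m' + 2 := ⟨m - 2, by omega⟩
  have hk1 : pderiv 1 (pderiv 1 p) = 0 := by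
    have h0 : pderiv 0 (pderiv 0 p) = 0 := by rw [hx]; simp
    rw [h0, zero_add] at hharm
    exact hharm
  have hk0 : pderiv 0 (pderiv 1 p) = 0 := by
    rw [pderiv_comm2, hx]; simp
  have hkh : (pderiv 1 p).IsHomogeneous (m' + 1) := pderiv_homog 1 hp
  have he := euler2 hkh
  rw [hk0, hk1] at he
  simp only [mul_zero, add_zero, zero_add] at he
  have hk : pderiv 1 p = 0 := smul_zero_cancel (by positivity) he.symm
  have he2 := euler2 hp
  rw [hx, hk] at he2
  simp only [mul_zero, add_zero, zero_add] at he2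
  exact smul_zero_cancel (by positivity) he2.symm

private lemma key (m : ℕ) (hm : 1 ≤ m) :
    ∀ p : MvPolynomial (Fin 2) ℝ, p.IsHomogeneous m →
    pderiv 0 (pderiv 0 p) + pderiv 1 (pderiv 1 p) = 0 → p ≠ 0 →
    ∀ q : ℝ × ℝ, q ≠ 0 →
      eval ![q.1, q.2] (pderiv 0 p) ≠ 0 ∨ eval ![q.1, q.2] (pderiv 1 p) ≠ 0 := by
  induction m, hm using Nat.le_induction with
  | base =>
    intro p hp hharm hne q hq
    by_contra hcon
    push_neg at hcon
    obtain ⟨ha, hb⟩ := hcon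
    have h0 : pderiv 0 p = 0 := by
      have hh := homog0 (pderiv_homog (m := 0) 0 hp)
      have : coeff 0 (pderiv 0 p) = 0 := by
        have := congrArg (eval ![q.1, q.2]) hh
        rw [ha, eval_C] at this
        exact this.symm
      rw [hh, this, map_zero]
    have h1 : pderiv 1 p = 0 := by
      have hh := homog0 (pderiv_homog (m := 0) 1 hp)
      have : coeff 0 (pderiv 1 p) = 0 := by
        have := congrArg (eval ![q.1, q.2]) hh
        rw [hb, eval_C] at this
        exact this.symm
      rw [hh, this, map_zero]
    have he := euler2 hp
    rw [h0, h1] at he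
    simp only [mul_zero, add_zero, zero_add, Nat.cast_one, one_smul] at he
    exact hne he.symm
  | succ m hm IH =>
    intro p hp hharm hne q hq
    by_contra hcon
    push_neg at hcon
    obtain ⟨ha, hb⟩ := hcon
    set v : Fin 2 → ℝ := ![q.1, q.2] with hv
    have hgne : pderiv 0 p ≠ 0 := fun h => hne (eq_zero_of_pd0 (by omega) hp hharm h)
    have hg : (pderiv 0 p).IsHomogeneous m := pderiv_homog 0 hp
    have hk : (pderiv 1 p).IsHomogeneous m := pderiv_homog 1 hp
    have harm_g : pderiv 0 (pderiv 0 (pderiv 0 p)) + pderiv 1 (pderiv 1 (pderiv 0 p)) = 0 := by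
      rw [show pderiv 1 (pderiv 1 (pderiv 0 p)) = pderiv 0 (pderiv 1 (pderiv 1 p)) by
        rw [pderiv_comm2 1 0 p, pderiv_comm2 1 0 (pderiv 1 p)],
        ← map_add, hharm, map_zero]
    have hIH := IH (pderiv 0 p) hg harm_g hgne q hq
    set A := eval v (pderiv 0 (pderiv 0 p)) with hA
    set B := eval v (pderiv 1 (pderiv 0 p)) with hB
    have hv0 : v 0 = q.1 := rfl
    have hv1 : v 1 = q.2 := rfl
    have E1 : q.1 * A + q.2 * B = 0 := by
      have := euler_eval hg v
      rw [hv0, hv1, ha, mul_zero] at this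
      exact this
    have E2 : q.1 * B - q.2 * A = 0 := by
      have := euler_eval hk v
      rw [hv0, hv1, hb, mul_zero] at this
      have hc1 : eval v (pderiv 0 (pderiv 1 p)) = B := by rw [pderiv_comm2]
      have hc2 : eval v (pderiv 1 (pderiv 1 p)) = -A := by
        have h2 : pderiv 1 (pderiv 1 p) = -(pderiv 0 (pderiv 0 p)) := by
          rw [eq_neg_iff_add_eq_zero, add_comm]; exact hharm
        rw [h2, map_neg, hA]
      rw [hc1, hc2] at this
      linarith
    have hqpos : 0 < q.1 ^ 2 + q.2 ^ 2 := by
      have : q.1 ≠ 0 ∨ q.2 ≠ 0 := by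
        by_contra hc
        push_neg at hc
        exact hq (Prod.ext hc.1 hc.2)
      rcases this with h | h
      · nlinarith [pow_two_pos_of_ne_zero h, sq_nonneg q.2]
      · nlinarith [pow_two_pos_of_ne_zero h, sq_nonneg q.1]
    have hA0 : A = 0 := by
      have h3 : (q.1 ^ 2 + q.2 ^ 2) * A = 0 := by linear_combination q.1 * E1 - q.2 * E2
      rcases mul_eq_zero.mp h3 with h | h
      · exact absurd h (ne_of_gt hqpos)
      · exact h
    have hB0 : B = 0 := by
      have h3 : (q.1 ^ 2 + q.2 ^ 2) * B = 0 := by linear_combination q.2 * E1 + q.1 * E2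
      rcases mul_eq_zero.mp h3 with h | h
      · exact absurd h (ne_of_gt hqpos)
      · exact h
    rcases hIH with h | h
    · exact h hA0
    · exact h hB0

/-- For a nonzero harmonic homogeneous polynomial `h` of degree `n ≥ 3`
in two variables, the Hessian determinant is `-(h_xx² + h_xy²)`, and it is negative away
from the origin. -/
theorem hessian_det_of_harmonic_homogeneous_neg
    (n : ℕ) (hn : 3 ≤ n) (h : MvPolynomial (Fin 2) ℝ) (hne : h ≠ 0)
    (hhom : h.IsHomogeneous n)
    (hharm : pderiv 0 (pderiv 0 h) + pderiv 1 (pderiv 1 h) = 0) :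
    ∀ q : ℝ × ℝ, q ≠ 0 →
      (eval ![q.1, q.2] (pderiv 0 (pderiv 0 h)) * eval ![q.1, q.2] (pderiv 1 (pderiv 1 h)) -
        eval ![q.1, q.2] (pderiv 1 (pderiv 0 h)) * eval ![q.1, q.2] (pderiv 0 (pderiv 1 h)) =
        -((eval ![q.1, q.2] (pderiv 0 (pderiv 0 h))) ^ 2 +
          (eval ![q.1, q.2] (pderiv 1 (pderiv 0 h))) ^ 2)) ∧
      eval ![q.1, q.2] (pderiv 0 (pderiv 0 h)) * eval ![q.1, q.2] (pderiv 1 (pderiv 1 h)) -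
        eval ![q.1, q.2] (pderiv 1 (pderiv 0 h)) * eval ![q.1, q.2] (pderiv 0 (pderiv 1 h)) < 0 := by
  intro q hq
  set v : Fin 2 → ℝ := ![q.1, q.2] with hv
  obtain ⟨n', rfl⟩ : ∃ n', n = n' + 3 := ⟨n - 3, by omega⟩
  have hp : (pderiv 0 h).IsHomogeneous (n' + 2) := pderiv_homog 0 hhom
  have harm_g : pderiv 0 (pderiv 0 (pderiv 0 h)) + pderiv 1 (pderiv 1 (pderiv 0 h)) = 0 := by
    rw [show pderiv 1 (pderiv 1 (pderiv 0 h)) = pderiv 0 (pderiv 1 (pderiv 1 h)) by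
      rw [pderiv_comm2 1 0 h, pderiv_comm2 1 0 (pderiv 1 h)],
      ← map_add, hharm, map_zero]
  have hgne : pderiv 0 h ≠ 0 := fun hz => hne (eq_zero_of_pd0 (by omega) hhom hharm hz)
  have hkey := key (n' + 2) (by omega) (pderiv 0 h) hp harm_g hgne q hq
  rw [← hv] at hkey
  set a := eval v (pderiv 0 (pderiv 0 h)) with ha
  set c := eval v (pderiv 1 (pderiv 0 h)) with hc
  have hyy : eval v (pderiv 1 (pderiv 1 h)) = -a := by
    have h2 : pderiv 1 (pderiv 1 h) = -(pderiv 0 (pderiv 0 h)) := by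
      rw [eq_neg_iff_add_eq_zero, add_comm]; exact hharm
    rw [h2, map_neg, ha]
  have hxy : eval v (pderiv 0 (pderiv 1 h)) = c := by rw [pderiv_comm2]
  rw [hyy, hxy]
  constructor
  · ring
  · have hpos : 0 < a ^ 2 + c ^ 2 := by
      rcases hkey with hk | hk
      · nlinarith [pow_two_pos_of_ne_zero hk, sq_nonneg c]
      · nlinarith [pow_two_pos_of_ne_zero hk, sq_nonneg a]
    nlinarith
end
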